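/- Let H, U be Hilbert spaces, G : U → H bounded, Q = G G*. For z ∈ H and α > 0 set u_α = G*(α I + Q)^{-1} z. Then ‖u_α‖² = ⟨Q (α I + Q)^{-1} z, (α I + Q)^{-1} z⟩, and if z ∉ range(G) with range(G) dense, then ‖u_α‖ → ∞ as α → 0⁺ or G u_α = z for some α; in particular ⟨u_α, u_α⟩ ≤ (1/α)⟨z − G u_α, z⟩. -/

import Mathlib

open Filter RealInnerProductSpace Topology

section Aux

variable {H U : Type*}
    [NormedAddCommGroup H] [InnerProductSpace ℝ H] [CompleteSpace H]
    [NormedAddCommGroup U] [InnerProductSpace ℝ U] [CompleteSpace U]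
    (G : U →L[ℝ] H)
    (inv : ℝ → H →L[ℝ] H)
    (hinv : ∀ α : ℝ, 0 < α →
      (α • ContinuousLinearMap.id ℝ H + G ∘L ContinuousLinearMap.adjoint G) ∘L inv α
        = ContinuousLinearMap.id ℝ H ∧
      inv α ∘L (α • ContinuousLinearMap.id ℝ H + G ∘L ContinuousLinearMap.adjoint G)
        = ContinuousLinearMap.id ℝ H)

local notation "A" => ContinuousLinearMap.adjoint G

include hinv

lemma aux1 {α : ℝ} (hα : 0 < α) (x : H) :
    α • inv α x + G (A (inv α x)) = x := by
  have h := congrArg (fun T : H →L[ℝ] H => T x) (hinv α hα).1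
  simpa using h

lemma aux2 {α : ℝ} (hα : 0 < α) (x : H) :
    inv α (α • x + G (A x)) = x := by
  have h := congrArg (fun T : H →L[ℝ] H => T x) (hinv α hα).2
  simpa using h

lemma auxQ {α : ℝ} (hα : 0 < α) (x : H) :
    inv α (G (A x)) = G (A (inv α x)) := by
  have h1 : G (A x) = α • (G (A (inv α x))) + G (A (G (A (inv α x)))) := by
    conv_lhs => rw [← aux1 G inv hinv hα x]
    simp [map_add, map_smul]
  rw [h1, aux2 G inv hinv hα]

lemma auxR {α β : ℝ} (hα : 0 < α) (hβ : 0 < β) (x : H) :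
    inv α (inv β x) = inv β (inv α x) := by
  have hM : ∀ a b : H, α • a + G (A a) = α • b + G (A b) → a = b := by
    intro a b h
    have := congrArg (inv α) h
    rwa [aux2 G inv hinv hα, aux2 G inv hinv hα] at this
  apply hM
  rw [aux1 G inv hinv hα (inv β x)]
  rw [← auxQ G inv hinv hβ (inv α x), ← map_smul, ← map_add, aux1 G inv hinv hα x]


lemma auxPos {α β : ℝ} (hα : 0 < α) (hβ : 0 < β) (z : H) :
    0 ≤ ⟪G (A (inv α z)), inv α (inv β z)⟫ := by
  set p := inv α (inv β z) with hp
  have hzp : inv α z = β • p + G (A p) := by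
    conv_lhs => rw [← aux1 G inv hinv hβ z]
    rw [map_add, map_smul, auxQ G inv hinv hα]
  have e1 : ⟪G (A p), p⟫ = ⟪A p, A p⟫ :=
    (ContinuousLinearMap.adjoint_inner_right G (A p) p).symm
  have e2 : ⟪G (A (G (A p))), p⟫ = ⟪G (A p), G (A p)⟫ := by
    rw [← ContinuousLinearMap.adjoint_inner_right G (A (G (A p))) p]
    exact ContinuousLinearMap.adjoint_inner_left G (A p) (G (A p))
  have : ⟪G (A (inv α z)), p⟫ = β * ⟪A p, A p⟫ + ⟪G (A p), G (A p)⟫ := by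
    rw [hzp]
    rw [map_add, map_smul, map_add, map_smul]
    rw [inner_add_left, real_inner_smul_left, e1, e2]
  rw [this]
  have n1 : (0:ℝ) ≤ ⟪A p, A p⟫ := real_inner_self_nonneg
  have n2 : (0:ℝ) ≤ ⟪G (A p), G (A p)⟫ := real_inner_self_nonneg
  nlinarith

lemma auxRes {α β : ℝ} (hα : 0 < α) (hβ : 0 < β) (z : H) :
    inv β z - inv α z = (α - β) • inv α (inv β z) := by
  have hz := aux1 G inv hinv hβ z
  have h1 : α • inv β z + G (A (inv β z)) = (α - β) • inv β z + z := by
    calc α • inv β z + G (A (inv β z))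
        = (α - β) • inv β z + (β • inv β z + G (A (inv β z))) := by module
      _ = (α - β) • inv β z + z := by rw [hz]
  have h2 := aux2 G inv hinv hα (inv β z)
  rw [h1, map_add, map_smul] at h2
  rw [sub_eq_iff_eq_add]
  exact h2.symm

lemma auxKey {α β : ℝ} (hβ : 0 < β) (hβα : β ≤ α) (z : H) :
    ‖A (inv α z)‖ ^ 2 ≤ ⟪A (inv α z), A (inv β z)⟫ := by
  have hα : 0 < α := hβ.trans_le hβα
  have hdiff : ⟪A (inv α z), A (inv β z)⟫ - ‖A (inv α z)‖ ^ 2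
      = (α - β) * ⟪G (A (inv α z)), inv α (inv β z)⟫ := by
    rw [← real_inner_self_eq_norm_sq, ← inner_sub_right, ← map_sub,
      auxRes G inv hinv hα hβ z, map_smul, real_inner_smul_right,
      ContinuousLinearMap.adjoint_inner_right G (A (inv α z)) (inv α (inv β z))]
  have hpos := auxPos G inv hinv hα hβ z
  nlinarith

lemma auxMin {α : ℝ} (hα : 0 < α) (z : H) (v : U) :
    ‖G (A (inv α z)) - z‖ ^ 2 + α * ‖A (inv α z)‖ ^ 2
      ≤ ‖G v - z‖ ^ 2 + α * ‖v‖ ^ 2 := by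
  set w := inv α z with hw
  set h := v - A w with hh
  have hv : v = A w + h := by rw [hh]; abel
  have hGz : G (A w) - z = -(α • w) := by
    have := aux1 G inv hinv hα z
    rw [← this]; abel
  have horth : ⟪G (A w) - z, G h⟫ + α * ⟪A w, h⟫ = 0 := by
    rw [hGz]
    rw [inner_neg_left, real_inner_smul_left,
      ← ContinuousLinearMap.adjoint_inner_left G h w]
    ring
  have hGv : G v - z = (G (A w) - z) + G h := by rw [hv, map_add]; abel
  have e1 : ‖G v - z‖ ^ 2 = ‖G (A w) - z‖ ^ 2 + 2 * ⟪G (A w) - z, G h⟫ + ‖G h‖ ^ 2 := by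
    rw [hGv]; exact norm_add_sq_real _ _
  have e2 : ‖v‖ ^ 2 = ‖A w‖ ^ 2 + 2 * ⟪A w, h⟫ + ‖h‖ ^ 2 := by
    rw [hv]; exact norm_add_sq_real _ _
  nlinarith [sq_nonneg ‖G h‖, sq_nonneg ‖h‖]

end Aux
/-- For `u_α = G*(αI+Q)⁻¹ z`: the norm identity
`‖u_α‖² = ⟨Q (αI+Q)⁻¹ z, (αI+Q)⁻¹ z⟩`, the inequality
`⟨u_α, u_α⟩ ≤ (1/α) ⟨z - G u_α, z⟩`, and, if `G` has dense range and
`z ∉ range G`, then `‖u_α‖ → ∞` as `α → 0⁺` or `G u_α = z` for some `α > 0`. -/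
theorem stmt_16 {H U : Type*}
    [NormedAddCommGroup H] [InnerProductSpace ℝ H] [CompleteSpace H]
    [NormedAddCommGroup U] [InnerProductSpace ℝ U] [CompleteSpace U]
    (G : U →L[ℝ] H)
    (inv : ℝ → H →L[ℝ] H)
    (hinv : ∀ α : ℝ, 0 < α →
      (α • ContinuousLinearMap.id ℝ H + G ∘L ContinuousLinearMap.adjoint G) ∘L inv α
        = ContinuousLinearMap.id ℝ H ∧
      inv α ∘L (α • ContinuousLinearMap.id ℝ H + G ∘L ContinuousLinearMap.adjoint G)
        = ContinuousLinearMap.id ℝ H)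
    (z : H)
    (u : ℝ → U)
    (hu : ∀ α : ℝ, u α = ContinuousLinearMap.adjoint G (inv α z)) :
    (∀ α : ℝ, 0 < α →
      ‖u α‖ ^ 2 = ⟪(G ∘L ContinuousLinearMap.adjoint G) (inv α z), inv α z⟫) ∧
    (∀ α : ℝ, 0 < α → ⟪u α, u α⟫ ≤ (1 / α) * ⟪z - G (u α), z⟫) ∧
    (DenseRange G → z ∉ Set.range G →
      (Tendsto (fun α : ℝ => ‖u α‖) (nhdsWithin 0 (Set.Ioi 0)) atTop ∨
        ∃ α : ℝ, 0 < α ∧ G (u α) = z)) := by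
  refine ⟨?_, ?_, ?_⟩
  · intro α hα
    rw [hu, ContinuousLinearMap.comp_apply, ← real_inner_self_eq_norm_sq]
    exact ContinuousLinearMap.adjoint_inner_right G
      (ContinuousLinearMap.adjoint G (inv α z)) (inv α z)
  · intro α hα
    set w := inv α z with hw
    have hz : α • w + G (ContinuousLinearMap.adjoint G w) = z := aux1 G inv hinv hα z
    have hzu : z - G (u α) = α • w := by
      rw [hu, ← hw, ← hz]; abel
    have hwz : ⟪w, z⟫ = α * ‖w‖ ^ 2 + ⟪u α, u α⟫ := by
      rw [← hz, inner_add_right, real_inner_smul_right, real_inner_self_eq_norm_sq, hu, ← hw,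
        ← ContinuousLinearMap.adjoint_inner_left G
          (ContinuousLinearMap.adjoint G w) w]
    rw [hzu, real_inner_smul_left, hwz]
    have hid : 1 / α * (α * (α * ‖w‖ ^ 2 + ⟪u α, u α⟫)) = α * ‖w‖ ^ 2 + ⟪u α, u α⟫ := by
      field_simp
    rw [hid]
    nlinarith [sq_nonneg ‖w‖]
  · intro hdense hz
    left
    by_contra hT
    rw [tendsto_atTop] at hT
    push_neg at hT
    obtain ⟨C, hC⟩ := hT
    have hmono : ∀ {β α : ℝ}, 0 < β → β ≤ α → ‖u α‖ ≤ ‖u β‖ := by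
      intro β α hβ hβα
      have hk := auxKey G inv hinv hβ hβα z
      rw [← hu, ← hu] at hk
      have hle := real_inner_le_norm (u α) (u β)
      nlinarith [norm_nonneg (u α), norm_nonneg (u β)]
    have hbound : ∀ α : ℝ, 0 < α → ‖u α‖ ≤ C := by
      intro α hα
      have hev : ∀ᶠ x in nhdsWithin (0:ℝ) (Set.Ioi 0), x ∈ Set.Ioo 0 α :=
        Filter.eventually_of_mem (Ioo_mem_nhdsGT_of_mem ⟨le_refl 0, hα⟩) (fun x hx => hx)
      obtain ⟨β, hβlt, hβmem⟩ := (hC.and_eventually hev).exists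
      exact le_trans (hmono hβmem.1 hβmem.2.le) hβlt.le
    have hcau : ∀ {β α : ℝ}, 0 < β → β ≤ α →
        ‖u β - u α‖ ^ 2 ≤ ‖u β‖ ^ 2 - ‖u α‖ ^ 2 := by
      intro β α hβ hβα
      have hk := auxKey G inv hinv hβ hβα z
      rw [← hu, ← hu] at hk
      have hns := norm_sub_sq_real (u β) (u α)
      rw [real_inner_comm] at hns
      linarith
    set f : ℝ → ℝ := fun α => ‖u α‖ ^ 2 with hf
    set L := sSup (f '' Set.Ioi 0) with hL
    have hCnn : 0 ≤ C := le_trans (norm_nonneg (u 1)) (hbound 1 one_pos)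
    have hbdd : BddAbove (f '' Set.Ioi 0) := by
      refine ⟨C ^ 2, ?_⟩
      rintro y ⟨α, hα, rfl⟩
      simp only [Set.mem_Ioi] at hα
      exact pow_le_pow_left₀ (norm_nonneg _) (hbound α hα) 2
    have hne : (f '' Set.Ioi 0).Nonempty := ⟨f 1, 1, Set.mem_Ioi.mpr one_pos, rfl⟩
    have hub : ∀ α : ℝ, 0 < α → f α ≤ L := fun α hα => le_csSup hbdd ⟨α, hα, rfl⟩
    have hexists : ∀ ε : ℝ, 0 < ε → ∃ δ : ℝ, 0 < δ ∧ L - ε < f δ := by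
      intro ε hε
      obtain ⟨y, ⟨δ, hδ, rfl⟩, hy⟩ := exists_lt_of_lt_csSup hne (by linarith : L - ε < L)
      exact ⟨δ, Set.mem_Ioi.mp hδ, hy⟩
    set a : ℕ → ℝ := fun n => 1 / ((n : ℝ) + 1) with ha
    have hapos : ∀ n : ℕ, 0 < a n := fun n => by positivity
    have hamono : ∀ m n : ℕ, m ≤ n → a n ≤ a m := by
      intro m n hmn
      have h1 : (0:ℝ) < (m : ℝ) + 1 := by positivity
      have h2 : (m:ℝ) + 1 ≤ (n:ℝ) + 1 := by
        have : (m:ℝ) ≤ (n:ℝ) := Nat.cast_le.mpr hmn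
        linarith
      exact one_div_le_one_div_of_le h1 h2
    have ha0 : Tendsto a atTop (𝓝 0) := tendsto_one_div_add_atTop_nhds_zero_nat
    have hcauchy : CauchySeq (fun n => u (a n)) := by
      rw [Metric.cauchySeq_iff']
      intro ε hε
      obtain ⟨δ, hδ, hδf⟩ := hexists (ε ^ 2 / 2) (by positivity)
      obtain ⟨N, hN⟩ := eventually_atTop.mp (ha0.eventually (gt_mem_nhds hδ))
      refine ⟨N, fun n hn => ?_⟩
      have h1 : a n ≤ a N := hamono N n hn
      have h2 : a N < δ := hN N le_rfl
      have hk := hcau (hapos n) h1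
      have hfn : f (a n) ≤ L := hub _ (hapos n)
      have hfN : L - ε ^ 2 / 2 < f (a N) := by
        refine lt_of_lt_of_le hδf ?_
        exact pow_le_pow_left₀ (norm_nonneg _) (hmono (hapos N) h2.le) 2
      have hfn' : ‖u (a n)‖ ^ 2 ≤ L := hfn
      have hfN' : L - ε ^ 2 / 2 < ‖u (a N)‖ ^ 2 := hfN
      rw [dist_eq_norm]
      nlinarith [norm_nonneg (u (a n) - u (a N))]
    obtain ⟨u₀, hu₀⟩ := cauchySeq_tendsto_of_complete hcauchy
    have hG1 : Tendsto (fun n => G (u (a n))) atTop (𝓝 (G u₀)) :=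
      (G.continuous.continuousAt.tendsto).comp hu₀
    have hG2 : Tendsto (fun n => G (u (a n))) atTop (𝓝 z) := by
      rw [Metric.tendsto_atTop]
      intro ε hε
      obtain ⟨v, hv⟩ := hdense.exists_dist_lt z (half_pos hε)
      have hvlt : ‖G v - z‖ < ε / 2 := by
        rw [norm_sub_rev, ← dist_eq_norm]; exact hv
      have hmin : ∀ n : ℕ, ‖G (u (a n)) - z‖ ^ 2 ≤ ‖G v - z‖ ^ 2 + a n * ‖v‖ ^ 2 := by
        intro n
        have h := auxMin G inv hinv (hapos n) z v
        rw [← hu (a n)] at h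
        have hnn : 0 ≤ a n * ‖u (a n)‖ ^ 2 :=
          mul_nonneg (hapos n).le (sq_nonneg _)
        linarith
      obtain ⟨N, hN⟩ := eventually_atTop.mp (ha0.eventually
        (gt_mem_nhds (show (0:ℝ) < ε ^ 2 / (4 * (‖v‖ ^ 2 + 1)) by positivity)))
      refine ⟨N, fun n hn => ?_⟩
      have h1 := hmin n
      have h2 : a n * ‖v‖ ^ 2 < ε ^ 2 / 4 := by
        have h3 := hN n hn
        have hvnn : (0:ℝ) ≤ ‖v‖ ^ 2 := sq_nonneg _
        have h4 : ε ^ 2 / (4 * (‖v‖ ^ 2 + 1)) * (‖v‖ ^ 2 + 1) = ε ^ 2 / 4 := by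
          field_simp
        calc a n * ‖v‖ ^ 2 ≤ a n * (‖v‖ ^ 2 + 1) := by nlinarith [(hapos n).le]
          _ < ε ^ 2 / (4 * (‖v‖ ^ 2 + 1)) * (‖v‖ ^ 2 + 1) :=
              mul_lt_mul_of_pos_right h3 (by positivity)
          _ = ε ^ 2 / 4 := h4
      rw [dist_eq_norm]
      nlinarith [norm_nonneg (G (u (a n)) - z), norm_nonneg (G v - z)]
    exact hz ⟨u₀, tendsto_nhds_unique hG1 hG2⟩
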